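/- Let k ≥ 1, let n ≥ 2, and let ζ ∈ ℂ be a primitive (2n)-th root of unity. A matrix X : Matrix I_k I_k ℂ commutes with both D(k,ζ) and P_k if and only if: (i) X r s = 0 for all r, s : I_k with |r| ≢ |s| (mod n), and (ii) X (−r) (−s) = X r s for all r, s : I_k. Consequently, the elements E_{r,s} + E_{−r,−s}, taken over pairs r, s with |r| ≡ |s| (mod n) and one representative from each pair {(r,s), (−r,−s)}, form a ℂ-basis of the centralizer algebra Z_k(D_n) = End_{D_n}(V^{⊗k}). -/

import Mathlib

open Matrix

/-- The number of `-1` factors (encoded as `true`) in a simple tensor index. -/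
def wt {k : ℕ} (r : Fin k → Bool) : ℕ := (Finset.univ.filter fun i => r i = true).card

/-- The sign-reversal `-r` of an index, `(−r) i = ¬ (r i)`. -/
def negt {k : ℕ} (r : Fin k → Bool) : Fin k → Bool := fun i => !(r i)

/-- The matrix of `g^{⊗k}` on `V^{⊗k}` for `g = diag(ζ⁻¹, ζ)`. -/
noncomputable def Dmat (k : ℕ) (ζ : ℂ) : Matrix (Fin k → Bool) (Fin k → Bool) ℂ :=
  Matrix.diagonal fun r => ζ ^ ((k : ℤ) - 2 * (wt r : ℤ))

/-- The 0–1 matrix with `P r s = 1` iff `s = −r`; `i^k · P_k` is the matrix of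
`h^{⊗k}` for `h = [[0,i],[i,0]]`. -/
noncomputable def Pmat (k : ℕ) : Matrix (Fin k → Bool) (Fin k → Bool) ℂ :=
  Matrix.of fun r s => if s = negt r then 1 else 0

/-- The centralizer of a matrix `M`, as a submodule of the matrix algebra. -/
noncomputable def commSub {I : Type*} [Fintype I] [DecidableEq I] (M : Matrix I I ℂ) :
    Submodule ℂ (Matrix I I ℂ) where
  carrier := {X | X * M = M * X}
  add_mem' := by
    intro a b ha hb
    simp only [Set.mem_setOf_eq] at *
    rw [add_mul, mul_add, ha, hb]
  zero_mem' := by simp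
  smul_mem' := by
    intro c X hX
    simp only [Set.mem_setOf_eq] at *
    rw [smul_mul_assoc, mul_smul_comm, hX]

lemma negt_negt {k : ℕ} (r : Fin k → Bool) : negt (negt r) = r := by
  funext i; simp [negt]

lemma negt_eq_iff {k : ℕ} {r s : Fin k → Bool} : negt r = s ↔ r = negt s := by
  constructor <;> rintro rfl <;> simp [negt_negt]

lemma wt_add_wt_negt {k : ℕ} (r : Fin k → Bool) : wt r + wt (negt r) = k := by
  classical
  have h : wt (negt r) = (Finset.univ.filter fun i => ¬ (r i = true)).card := by
    unfold wt negt
    congr 1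
    ext i
    simp
  rw [h]
  unfold wt
  rw [Finset.card_filter_add_card_filter_not]
  simp

lemma modeq_negt {k n : ℕ} {r s : Fin k → Bool} (h : wt r ≡ wt s [MOD n]) :
    wt (negt r) ≡ wt (negt s) [MOD n] := by
  refine h.add_left_cancel ?_
  rw [wt_add_wt_negt, wt_add_wt_negt]

lemma hd_lemma (k n : ℕ) (hn : 2 ≤ n) (ζ : ℂ) (hζ : IsPrimitiveRoot ζ (2 * n))
    (r s : Fin k → Bool) :
    (ζ ^ ((k:ℤ) - 2 * (wt r : ℤ)) = ζ ^ ((k:ℤ) - 2 * (wt s : ℤ))) ↔ wt r ≡ wt s [MOD n] := by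
  have hζ0 : ζ ≠ 0 := hζ.ne_zero (by positivity)
  rw [← div_eq_one_iff_eq (zpow_ne_zero _ hζ0), ← zpow_sub₀ hζ0, hζ.zpow_eq_one_iff_dvd]
  have he : (k:ℤ) - 2*(wt r:ℤ) - ((k:ℤ) - 2*(wt s:ℤ)) = 2 * ((wt s : ℤ) - (wt r : ℤ)) := by ring
  rw [he, Nat.modEq_iff_dvd]
  push_cast
  constructor
  · intro h
    exact (mul_dvd_mul_iff_left (two_ne_zero (α := ℤ))).mp h
  · intro h
    exact mul_dvd_mul_left 2 h


lemma comm_iff (k n : ℕ) (hn : 2 ≤ n) (ζ : ℂ) (hζ : IsPrimitiveRoot ζ (2 * n))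
    (X : Matrix (Fin k → Bool) (Fin k → Bool) ℂ) :
    (X * Dmat k ζ = Dmat k ζ * X ∧ X * Pmat k = Pmat k * X) ↔
      ((∀ r s : Fin k → Bool, ¬ (wt r ≡ wt s [MOD n]) → X r s = 0) ∧
        ∀ r s : Fin k → Bool, X (negt r) (negt s) = X r s) := by
  classical
  have hXP : ∀ r s, (X * Pmat k) r s = X r (negt s) := by
    intro r s
    rw [Matrix.mul_apply, Finset.sum_eq_single (negt s)]
    · simp [Pmat, negt_negt]
    · intro t _ ht
      have hne : s ≠ negt t := by
        intro h; apply ht; rw [h, negt_negt]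
      simp [Pmat, hne]
    · simp
  have hPX : ∀ r s, (Pmat k * X) r s = X (negt r) s := by
    intro r s
    rw [Matrix.mul_apply, Finset.sum_eq_single (negt r)]
    · simp [Pmat]
    · intro t _ ht
      simp [Pmat, ht]
    · simp
  constructor
  · rintro ⟨hD, hP⟩
    constructor
    · intro r s hmod
      have h1 := Matrix.ext_iff.mpr hD r s
      rw [Dmat, Matrix.mul_diagonal, Matrix.diagonal_mul] at h1
      by_contra hX
      apply hmod
      rw [← hd_lemma k n hn ζ hζ r s]
      rw [mul_comm (ζ ^ ((k:ℤ) - 2 * (wt r:ℤ)))] at h1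
      exact (mul_left_cancel₀ hX h1).symm
    · intro r s
      have h1 := Matrix.ext_iff.mpr hP r (negt s)
      rw [hXP, hPX, negt_negt] at h1
      exact h1.symm
  · rintro ⟨h1, h2⟩
    constructor
    · ext r s
      rw [Dmat, Matrix.mul_diagonal, Matrix.diagonal_mul]
      by_cases hmod : wt r ≡ wt s [MOD n]
      · rw [(hd_lemma k n hn ζ hζ r s).mpr hmod]
        ring
      · rw [h1 r s hmod]; ring
    · ext r s
      rw [hXP, hPX]
      have := h2 r (negt s)
      rw [negt_negt] at this
      exact this.symm

lemma sum_ite_subtype {α : Type*} [DecidableEq α] (S : Finset α) (a : α)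
    (f : {p // p ∈ S} → ℂ) :
    ∑ q : {p // p ∈ S}, (if q.1 = a then f q else 0) = if h : a ∈ S then f ⟨a, h⟩ else 0 := by
  by_cases h : a ∈ S
  · rw [dif_pos h, Finset.sum_eq_single (⟨a, h⟩ : {p // p ∈ S})]
    · rw [if_pos rfl]
    · intro q _ hq
      rw [if_neg]
      intro hq1
      exact hq (Subtype.ext hq1)
    · simp
  · rw [dif_neg h, Finset.sum_eq_zero]
    intro q _
    rw [if_neg]
    intro hq1
    exact h (hq1 ▸ q.2)


theorem stmt7 (k n : ℕ) (hk : 1 ≤ k) (hn : 2 ≤ n) (ζ : ℂ)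
    (hζ : IsPrimitiveRoot ζ (2 * n)) :
    (∀ X : Matrix (Fin k → Bool) (Fin k → Bool) ℂ,
      (X * Dmat k ζ = Dmat k ζ * X ∧ X * Pmat k = Pmat k * X) ↔
        ((∀ r s : Fin k → Bool, ¬ (wt r ≡ wt s [MOD n]) → X r s = 0) ∧
          ∀ r s : Fin k → Bool, X (negt r) (negt s) = X r s)) ∧
    ∀ S : Finset ((Fin k → Bool) × (Fin k → Bool)),
      (∀ p ∈ S, wt p.1 ≡ wt p.2 [MOD n]) →
      (∀ r s : Fin k → Bool, wt r ≡ wt s [MOD n] →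
        ((r, s) ∈ S ↔ (negt r, negt s) ∉ S)) →
      ∃ b : Module.Basis {p // p ∈ S} ℂ ↥(commSub (Dmat k ζ) ⊓ commSub (Pmat k)),
        ∀ p : {p // p ∈ S}, (b p : Matrix (Fin k → Bool) (Fin k → Bool) ℂ) =
          Matrix.single p.1.1 p.1.2 1
            + Matrix.single (negt p.1.1) (negt p.1.2) 1 := by
  refine ⟨fun X => comm_iff k n hn ζ hζ X, ?_⟩
  classical
  intro S hS1 hS2
  set M := commSub (Dmat k ζ) ⊓ commSub (Pmat k) with hMdef
  have hmem : ∀ X : Matrix (Fin k → Bool) (Fin k → Bool) ℂ, X ∈ M ↔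
      ((∀ r s : Fin k → Bool, ¬ (wt r ≡ wt s [MOD n]) → X r s = 0) ∧
        ∀ r s : Fin k → Bool, X (negt r) (negt s) = X r s) := by
    intro X
    rw [hMdef, Submodule.mem_inf]
    exact comm_iff k n hn ζ hζ X
  set B : {p // p ∈ S} → Matrix (Fin k → Bool) (Fin k → Bool) ℂ :=
    fun p => Matrix.single p.1.1 p.1.2 1
      + Matrix.single (negt p.1.1) (negt p.1.2) 1 with hBdef
  have hBform : ∀ (p : {p // p ∈ S}) (r s : Fin k → Bool),
      B p r s = (if p.1 = (r, s) then 1 else 0)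
        + (if p.1 = (negt r, negt s) then 1 else 0) := by
    intro p r s
    rw [hBdef]
    simp only [Matrix.add_apply, Matrix.single, Matrix.of_apply]
    congr 1
    · congr 1
      simp [Prod.ext_iff]
    · congr 1
      simp only [eq_iff_iff, Prod.ext_iff]
      constructor
      · rintro ⟨h1, h2⟩
        exact ⟨negt_eq_iff.mp h1, negt_eq_iff.mp h2⟩
      · rintro ⟨h1, h2⟩
        exact ⟨negt_eq_iff.mpr h1, negt_eq_iff.mpr h2⟩
  have hB : ∀ p : {p // p ∈ S}, B p ∈ M := by
    intro p
    rw [hmem]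
    constructor
    · intro r s hmod
      rw [hBform]
      rw [if_neg, if_neg, add_zero]
      · intro h
        apply hmod
        have hm := hS1 p.1 p.2
        rw [h] at hm
        have hm' : wt (negt r) ≡ wt (negt s) [MOD n] := hm
        have hm2 := modeq_negt hm'
        rw [negt_negt, negt_negt] at hm2
        exact hm2
      · intro h
        apply hmod
        have hm := hS1 p.1 p.2
        rw [h] at hm
        exact hm
    · intro r s
      rw [hBform, hBform, negt_negt, negt_negt, add_comm]
  have key2 : ∀ (c : {p // p ∈ S} → ℂ) (p : {p // p ∈ S}),
      (∑ q : {p // p ∈ S}, c q • B q) p.1.1 p.1.2 = c p := by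
    intro c p
    rw [Matrix.sum_apply]
    have hterm : ∀ q : {p // p ∈ S}, (c q • B q) p.1.1 p.1.2
        = (if q.1 = (p.1.1, p.1.2) then c q else 0)
          + (if q.1 = (negt p.1.1, negt p.1.2) then c q else 0) := by
      intro q
      rw [Matrix.smul_apply, hBform, smul_add]
      congr 1 <;> (split_ifs <;> simp)
    rw [Finset.sum_congr rfl (fun q _ => hterm q), Finset.sum_add_distrib,
        sum_ite_subtype, sum_ite_subtype]
    have hp1 : (p.1.1, p.1.2) = p.1 := rfl
    have h1 : (p.1.1, p.1.2) ∈ S := by rw [hp1]; exact p.2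
    have h2 : (negt p.1.1, negt p.1.2) ∉ S := by
      have hm := hS1 p.1 p.2
      exact (hS2 p.1.1 p.1.2 hm).mp (by rw [hp1]; exact p.2)
    rw [dif_pos h1, dif_neg h2, add_zero]
  have key : ∀ X : Matrix (Fin k → Bool) (Fin k → Bool) ℂ,
      (∀ r s, ¬ wt r ≡ wt s [MOD n] → X r s = 0) →
      (∀ r s, X (negt r) (negt s) = X r s) →
      ∑ q : {p // p ∈ S}, X q.1.1 q.1.2 • B q = X := by
    intro X hX1 hX2
    ext r s
    rw [Matrix.sum_apply]
    have hterm : ∀ q : {p // p ∈ S}, (X q.1.1 q.1.2 • B q) r s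
        = (if q.1 = (r, s) then X r s else 0)
          + (if q.1 = (negt r, negt s) then X r s else 0) := by
      intro q
      rw [Matrix.smul_apply, hBform, smul_add]
      congr 1
      · by_cases h : q.1 = (r, s)
        · rw [if_pos h, if_pos h, smul_eq_mul, mul_one]
          have h1 : q.1.1 = r := by rw [h]
          have h2 : q.1.2 = s := by rw [h]
          rw [h1, h2]
        · rw [if_neg h, if_neg h, smul_zero]
      · by_cases h : q.1 = (negt r, negt s)
        · rw [if_pos h, if_pos h, smul_eq_mul, mul_one]
          have h1 : q.1.1 = negt r := by rw [h]
          have h2 : q.1.2 = negt s := by rw [h]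
          rw [h1, h2, hX2]
        · rw [if_neg h, if_neg h, smul_zero]
    rw [Finset.sum_congr rfl (fun q _ => hterm q), Finset.sum_add_distrib,
        sum_ite_subtype, sum_ite_subtype]
    by_cases hmod : wt r ≡ wt s [MOD n]
    · by_cases hrs : (r, s) ∈ S
      · have hnrs : (negt r, negt s) ∉ S := (hS2 r s hmod).mp hrs
        rw [dif_pos hrs, dif_neg hnrs, add_zero]
      · have hnrs : (negt r, negt s) ∈ S := by
          by_contra hc
          exact hrs ((hS2 r s hmod).mpr hc)
        rw [dif_neg hrs, dif_pos hnrs, zero_add]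
    · have hrs : (r, s) ∉ S := fun hc => hmod (hS1 _ hc)
      have hnrs : (negt r, negt s) ∉ S := by
        intro hc
        have := hS1 _ hc
        apply hmod
        have := modeq_negt this
        rw [negt_negt, negt_negt] at this
        exact this
      rw [dif_neg hrs, dif_neg hnrs, add_zero, hX1 r s hmod]
  let e : ({p // p ∈ S} → ℂ) ≃ₗ[ℂ] M :=
    { toFun := fun c => ⟨∑ p : {p // p ∈ S}, c p • B p,
        Submodule.sum_mem M (fun p _ => Submodule.smul_mem M _ (hB p))⟩
      map_add' := by
        intro c d
        apply Subtype.ext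
        simp [add_smul, Finset.sum_add_distrib]
      map_smul' := by
        intro a c
        apply Subtype.ext
        simp [smul_smul, Finset.smul_sum]
      invFun := fun X p => X.1 p.1.1 p.1.2
      left_inv := by
        intro c
        funext p
        exact key2 c p
      right_inv := by
        intro X
        apply Subtype.ext
        obtain ⟨h1, h2⟩ := (hmem X.1).mp X.2
        exact key X.1 h1 h2 }
  refine ⟨(Pi.basisFun ℂ {p // p ∈ S}).map e, ?_⟩
  intro p
  rw [Module.Basis.map_apply, Pi.basisFun_apply]
  show (∑ q : {p // p ∈ S}, Pi.single p 1 q • B q) = _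
  rw [Finset.sum_eq_single p]
  · simp [hBdef]
  · intro q _ hq
    rw [Pi.single_apply, if_neg hq, zero_smul]
  · simp
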